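/- Let X, Y ⊂ ℝ² be nonempty closed sets and let f: X → Y be a homeomorphism. Then f maps the topological boundary of X onto the topological boundary of Y, i.e., f(∂X) = ∂Y, where ∂S denotes the boundary of S in ℝ². -/

import Mathlib

noncomputable section

abbrev E2 := EuclideanSpace ℝ (Fin 2)

open Set Metric Complex

namespace IoD

/-- `γ` has winding number `m` as a loop on `[0,1]`. -/
def HasWinding (γ : ℝ → ℂ) (m : ℤ) : Prop :=
  ∃ L : ℝ → ℂ, Continuous L ∧ (∀ t ∈ Icc (0:ℝ) 1, Complex.exp (L t) = γ t) ∧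
    L 1 - L 0 = m * (2 * Real.pi * Complex.I)

lemma cancel2pi {u v : ℤ} (h : (u:ℂ) * (2 * Real.pi * Complex.I) = (v:ℂ) * (2 * Real.pi * Complex.I)) :
    u = v := by
  have hne : (2 * (Real.pi:ℂ) * Complex.I) ≠ 0 := by
    simp [Real.pi_ne_zero, Complex.I_ne_zero, Complex.ofReal_ne_zero]
  have := mul_right_cancel₀ hne h
  exact_mod_cast this

lemma latticeEq (D : ℝ → ℂ) (hD : Continuous D) (a b : ℝ) (hab : a ≤ b)
    (hl : ∀ t ∈ Icc a b, ∃ n : ℤ, D t = n * (2 * Real.pi * Complex.I)) :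
    D a = D b := by
  obtain ⟨na, ha⟩ := hl a ⟨le_refl a, hab⟩
  obtain ⟨nb, hb⟩ := hl b ⟨hab, le_refl b⟩
  rcases eq_or_ne na nb with hnn | hnn
  · rw [ha, hb, hnn]
  exfalso
  set φ : ℝ → ℝ := fun t => (D t).im with hφ
  have hφc : ContinuousOn φ (uIcc a b) := (Complex.continuous_im.comp hD).continuousOn
  have him : ∀ n : ℤ, ((n : ℂ) * (2 * (Real.pi:ℝ) * Complex.I)).im = n * (2 * Real.pi) := by
    intro n; simp
  have hπ : (0:ℝ) < Real.pi := Real.pi_pos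
  have h1 : φ a = (na:ℝ) * (2 * Real.pi) := by simp only [hφ]; rw [ha]; exact him na
  have h2 : φ b = (nb:ℝ) * (2 * Real.pi) := by simp only [hφ]; rw [hb]; exact him nb
  -- pick the odd multiple of π between them
  have main : ∀ c : ℝ, c ∈ uIcc (φ a) (φ b) → (∃ j : ℤ, c = (2*j+1) * Real.pi) → False := by
    intro c hc ⟨j, hj⟩
    obtain ⟨t, ht, hφt⟩ := intermediate_value_uIcc hφc hc
    rw [Set.uIcc_of_le hab] at ht
    obtain ⟨k, hk⟩ := hl t ht
    have : φ t = (k:ℝ) * (2 * Real.pi) := by simp only [hφ]; rw [hk]; exact him k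
    rw [hφt, hj] at this
    have h2k : (2*(j:ℝ)+1) = 2*k := by
      have := mul_right_cancel₀ hπ.ne' (by linarith [this] : (2*(j:ℝ)+1) * Real.pi = (2*(k:ℝ)) * Real.pi)
      linarith
    have : 2*j+1 = 2*k := by exact_mod_cast h2k
    omega
  rcases lt_or_gt_of_ne hnn with hlt | hlt
  · refine main ((2*(na:ℝ)+1) * Real.pi) ?_ ⟨na, by push_cast; ring⟩
    rw [Set.mem_uIcc]; left
    constructor
    · rw [h1]; nlinarith
    · rw [h2]
      have : (2*(na:ℝ)+1) ≤ 2*(nb:ℝ) := by exact_mod_cast (by omega : 2*na+1 ≤ 2*nb)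
      nlinarith
  · refine main ((2*(nb:ℝ)+1) * Real.pi) ?_ ⟨nb, by push_cast; ring⟩
    rw [Set.mem_uIcc]; right
    constructor
    · rw [h2]; nlinarith
    · rw [h1]
      have : (2*(nb:ℝ)+1) ≤ 2*(na:ℝ) := by exact_mod_cast (by omega : 2*nb+1 ≤ 2*na)
      nlinarith

lemma windDeform (γ γ' : ℝ → ℂ) (m : ℤ)
    (hγc : Continuous γ) (hγ'c : Continuous γ')
    (hγ0 : ∀ t, γ t ≠ 0)
    (hloop : γ 1 = γ 0) (hloop' : γ' 1 = γ' 0)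
    (hclose : ∀ t, ‖γ' t - γ t‖ < ‖γ t‖) :
    HasWinding γ m → HasWinding γ' m := by
  rintro ⟨L, hLc, hLe, hLw⟩
  have hball : ∀ t, ‖γ' t / γ t - 1‖ < 1 := by
    intro t
    rw [show γ' t / γ t - 1 = (γ' t - γ t) / γ t by rw [sub_div, div_self (hγ0 t)]]
    rw [norm_div, div_lt_one (norm_pos_iff.mpr (hγ0 t))]
    exact hclose t
  have hslit : ∀ t, γ' t / γ t ∈ Complex.slitPlane := by
    intro t
    rw [Complex.mem_slitPlane_iff]; left
    have h2 : |(γ' t / γ t).re - 1| ≤ ‖γ' t / γ t - 1‖ := by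
      have := Complex.abs_re_le_norm (γ' t / γ t - 1)
      simpa [Complex.sub_re] using this
    have := abs_lt.mp (lt_of_le_of_lt h2 (hball t))
    linarith [this.1]
  have hr0 : ∀ t, γ' t / γ t ≠ 0 := fun t => Complex.slitPlane_ne_zero (hslit t)
  refine ⟨fun t => L t + Complex.log (γ' t / γ t), ?_, ?_, ?_⟩
  · apply hLc.add
    rw [continuous_iff_continuousAt]; intro t
    exact ContinuousAt.clog (ContinuousAt.div (hγ'c.continuousAt) (hγc.continuousAt) (hγ0 t)) (hslit t)
  · intro t ht
    rw [Complex.exp_add, hLe t ht, Complex.exp_log (hr0 t)]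
    field_simp [hγ0 t]
  · have hrr : γ' 1 / γ 1 = γ' 0 / γ 0 := by rw [hloop, hloop']
    simp only []
    rw [hrr]; ring_nf
    ring_nf at hLw
    linear_combination hLw

lemma windChain (Γ : ℝ → ℝ → ℂ) (m : ℤ) (ρ δ : ℝ) (hρ : 0 < ρ) (hδ : 0 < δ)
    (hc : ∀ s ∈ Icc (0:ℝ) 1, Continuous (Γ s))
    (hlb : ∀ s ∈ Icc (0:ℝ) 1, ∀ t, ρ ≤ ‖Γ s t‖)
    (hloop : ∀ s ∈ Icc (0:ℝ) 1, Γ s 1 = Γ s 0)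
    (hstep : ∀ s ∈ Icc (0:ℝ) 1, ∀ s' ∈ Icc (0:ℝ) 1, |s' - s| ≤ δ → ∀ t, ‖Γ s' t - Γ s t‖ < ρ)
    (h0 : HasWinding (Γ 0) m) : HasWinding (Γ 1) m := by
  obtain ⟨N, hN⟩ := exists_nat_gt (1/δ)
  have hN0 : (0:ℝ) < N := lt_trans (by positivity) hN
  have hstep' : (1:ℝ)/N < δ := by
    rw [div_lt_iff₀ hN0]
    have := (div_lt_iff₀ hδ).mp hN
    linarith
  have hmem : ∀ k : ℕ, k ≤ N → (k:ℝ)/N ∈ Icc (0:ℝ) 1 := by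
    intro k hk
    constructor
    · positivity
    · rw [div_le_one hN0]; exact_mod_cast hk
  have key : ∀ k : ℕ, k ≤ N → HasWinding (Γ (k/N)) m := by
    intro k
    induction k with
    | zero => intro _; simpa using h0
    | succ n ih =>
      intro hk
      have hn : n ≤ N := Nat.le_of_succ_le hk
      have h1 := hmem n hn
      have h2 := hmem (n+1) hk
      have hd : |((n+1:ℕ):ℝ)/N - (n:ℝ)/N| ≤ δ := by
        push_cast
        rw [show ((n:ℝ)+1)/N - (n:ℝ)/N = 1/N by ring]
        rw [abs_of_pos (by positivity)]
        exact hstep'.le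
      have hcl : ∀ t, ‖Γ (((n+1:ℕ):ℝ)/N) t - Γ ((n:ℝ)/N) t‖ < ‖Γ ((n:ℝ)/N) t‖ := by
        intro t
        calc ‖Γ (((n+1:ℕ):ℝ)/N) t - Γ ((n:ℝ)/N) t‖ < ρ := by
              have := hstep ((n:ℝ)/N) h1 (((n+1:ℕ):ℝ)/N) (by push_cast at h2 ⊢; exact h2) hd t
              exact this
          _ ≤ ‖Γ ((n:ℝ)/N) t‖ := hlb _ h1 t
      have hne1 : ∀ t, Γ ((n:ℝ)/N) t ≠ 0 := fun t =>
        norm_pos_iff.mp (lt_of_lt_of_le hρ (hlb _ h1 t))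
      exact windDeform _ _ m (hc _ h1) (hc _ (by push_cast at h2 ⊢; exact h2)) hne1
        (hloop _ h1) (hloop _ (by push_cast at h2 ⊢; exact h2)) hcl (ih hn)
  have := key N le_rfl
  rw [div_self hN0.ne'] at this
  exact this

lemma windOdd (γ : ℝ → ℂ) (hodd : ∀ t, γ (t + 1/2) = - γ t) :
    ¬ HasWinding γ 0 := by
  rintro ⟨L, hLc, hLe, hLw⟩
  set D : ℝ → ℂ := fun t => L (t + 1/2) - L t - Real.pi * Complex.I with hD
  have hDc : Continuous D := by
    apply Continuous.sub
    apply Continuous.sub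
    · exact hLc.comp (continuous_id.add continuous_const)
    · exact hLc
    · exact continuous_const
  have hl : ∀ t ∈ Icc (0:ℝ) (1/2), ∃ n : ℤ, D t = n * (2 * Real.pi * Complex.I) := by
    intro t ht
    have h1 : Complex.exp (L (t + 1/2)) = γ (t + 1/2) :=
      hLe _ ⟨by linarith [ht.1], by linarith [ht.2]⟩
    have h2 : Complex.exp (L t) = γ t := hLe _ ⟨ht.1, by linarith [ht.2]⟩
    have hne : γ t ≠ 0 := by rw [← h2]; exact Complex.exp_ne_zero _
    have hexp : Complex.exp (D t) = 1 := by
      rw [hD]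
      simp only []
      rw [show L (t + 1/2) - L t - (Real.pi:ℂ) * Complex.I
          = L (t + 1/2) - (L t + Real.pi * Complex.I) by ring]
      rw [Complex.exp_sub, Complex.exp_add, Complex.exp_pi_mul_I, h1, h2, hodd t]
      field_simp
    exact Complex.exp_eq_one_iff.mp hexp
  have heq := latticeEq D hDc 0 (1/2) (by norm_num) hl
  obtain ⟨n, hn⟩ := hl 0 ⟨le_refl 0, by norm_num⟩
  have hD0 : D 0 = L (1/2) - L 0 - Real.pi * Complex.I := by rw [hD]; norm_num
  have hDhalf : D (1/2) = L 1 - L (1/2) - Real.pi * Complex.I := by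
    rw [hD]; norm_num
  have hsum : (n:ℂ) * (2 * Real.pi * Complex.I) + (n:ℂ) * (2 * Real.pi * Complex.I)
      = - (2 * Real.pi * Complex.I) := by
    have e1 : D 0 = (n:ℂ) * (2 * Real.pi * Complex.I) := hn
    have e2 : D (1/2) = (n:ℂ) * (2 * Real.pi * Complex.I) := by rw [← heq]; exact hn
    rw [hD0] at e1
    rw [hDhalf] at e2
    have hz : L 1 - L 0 = 0 := by rw [hLw]; simp
    linear_combination (-1 : ℂ) * e1 + (-1 : ℂ) * e2 + hz
  have h2n : ((2*n+1:ℤ):ℂ) * (2 * Real.pi * Complex.I) = ((0:ℤ):ℂ) * (2 * Real.pi * Complex.I) := by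
    push_cast
    linear_combination hsum
  have hne : (2 * (Real.pi:ℂ) * Complex.I) ≠ 0 := by
    simp [Real.pi_ne_zero, Complex.I_ne_zero, Complex.ofReal_ne_zero]
  have := mul_right_cancel₀ hne h2n
  have : (2*n+1 : ℤ) = 0 := by exact_mod_cast this
  omega

/-- the unit circle loop -/
def cir (t : ℝ) : ℂ := Complex.exp (((2 * Real.pi * t : ℝ) : ℂ) * Complex.I)

lemma cir_cont : Continuous cir :=
  Complex.continuous_exp.comp ((Complex.continuous_ofReal.comp (by continuity)).mul continuous_const)

lemma cir_norm (t : ℝ) : ‖cir t‖ = 1 := by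
  rw [cir, Complex.norm_exp]
  simp

lemma cir_ne (t : ℝ) : cir t ≠ 0 := Complex.exp_ne_zero _

lemma cir_zero : cir 0 = 1 := by simp [cir]

lemma cir_loop : cir 1 = cir 0 := by
  rw [cir, cir]
  rw [show ((2 * Real.pi * (1:ℝ) : ℝ) : ℂ) * Complex.I = 2 * (Real.pi : ℂ) * Complex.I by push_cast; ring]
  rw [show ((2 * Real.pi * (0:ℝ) : ℝ) : ℂ) * Complex.I = 0 by push_cast; ring]
  rw [Complex.exp_two_pi_mul_I, Complex.exp_zero]

lemma cir_half (t : ℝ) : cir (t + 1/2) = - cir t := by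
  rw [cir, cir, show ((2 * Real.pi * (t + 1/2) : ℝ) : ℂ) * Complex.I
      = ((2 * Real.pi * t : ℝ) : ℂ) * Complex.I + (Real.pi : ℂ) * Complex.I by push_cast; ring,
    Complex.exp_add, Complex.exp_pi_mul_I]
  ring

lemma cir_fract (t : ℝ) : cir (Int.fract t) = cir t := by
  have h : ((2 * Real.pi * t : ℝ) : ℂ) * Complex.I
      = ((2 * Real.pi * Int.fract t : ℝ) : ℂ) * Complex.I + (⌊t⌋ : ℂ) * (2 * (Real.pi:ℂ) * Complex.I) := by
    rw [Int.fract]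
    push_cast
    ring
  rw [cir, cir, h, Complex.exp_add]
  rw [show (⌊t⌋ : ℂ) * (2 * (Real.pi:ℂ) * Complex.I) = (⌊t⌋ : ℂ) * (2 * (Real.pi:ℂ) * Complex.I) from rfl]
  have := Complex.exp_int_mul_two_pi_mul_I ⌊t⌋
  rw [show ((⌊t⌋:ℂ) * (2 * (Real.pi:ℂ) * Complex.I)) = ((⌊t⌋:ℂ) * (2 * ↑Real.pi * Complex.I)) from rfl, this, mul_one]

lemma key (h : ℂ → ℂ) (x : ℂ) (r : ℝ) (hr : 0 < r)
    (hc : ContinuousOn h (closedBall x r)) (hi : Set.InjOn h (closedBall x r)) :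
    h x ∈ interior (h '' closedBall x r) := by
  set K : Set ℂ := h '' closedBall x r with hK
  set p : ℂ := h x with hp
  have hxcb : x ∈ closedBall x r := mem_closedBall_self hr.le
  have hpK : p ∈ K := ⟨x, hxcb, rfl⟩
  have hKcompact : IsCompact K := (isCompact_closedBall x r).image_of_continuousOn hc
  have hKclosed : IsClosed K := hKcompact.isClosed
  have hKne : K.Nonempty := ⟨p, hpK⟩
  -- the image of the boundary sphere
  set Sph : Set ℂ := h '' sphere x r with hSph
  have hSphcompact : IsCompact Sph :=
    (isCompact_sphere x r).image_of_continuousOn (hc.mono sphere_subset_closedBall)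
  have hSphne : Sph.Nonempty := by
    obtain ⟨a, ha⟩ := (NormedSpace.sphere_nonempty.mpr hr.le : (sphere x r).Nonempty)
    exact ⟨h a, a, ha, rfl⟩
  have hpS : p ∉ Sph := by
    rintro ⟨a, haS, hap⟩
    have : a = x := hi (sphere_subset_closedBall haS) hxcb hap
    rw [mem_sphere] at haS
    rw [this] at haS
    simp at haS
    exact hr.ne' haS.symm
  set d : ℝ := infDist p Sph with hd
  have hdpos : 0 < d := (hSphcompact.isClosed.notMem_iff_infDist_pos hSphne).mp hpS
  -- membership facts for points on circles
  have hzmem : ∀ s ∈ Icc (0:ℝ) 1, ∀ c : ℂ, ‖c‖ = 1 → x + ((s*r : ℝ):ℂ) * c ∈ closedBall x r := by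
    intro s hs c hcn
    rw [mem_closedBall, dist_eq_norm]
    rw [show x + ((s*r : ℝ):ℂ) * c - x = ((s*r : ℝ):ℂ) * c by ring]
    rw [norm_mul, hcn, mul_one, Complex.norm_real, Real.norm_eq_abs,
      _root_.abs_of_nonneg (mul_nonneg hs.1 hr.le)]
    nlinarith [hs.2]
  have hzmem' : ∀ s ∈ Icc (0:ℝ) 1, ∀ c : ℂ, ‖c‖ = 1 → x - ((s*r : ℝ):ℂ) * c ∈ closedBall x r := by
    intro s hs c hcn
    have := hzmem s hs (-c) (by rwa [norm_neg])
    rw [show x + ((s*r : ℝ):ℂ) * (-c) = x - ((s*r : ℝ):ℂ) * c by ring] at this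
    exact this
  have hsphmem : ∀ t : ℝ, x + ((1*r : ℝ):ℂ) * cir t ∈ sphere x r := by
    intro t
    rw [mem_sphere, dist_eq_norm]
    rw [show x + ((1*r : ℝ):ℂ) * cir t - x = ((1*r : ℝ):ℂ) * cir t by ring]
    rw [norm_mul, cir_norm, mul_one, Complex.norm_real, Real.norm_eq_abs]
    rw [one_mul, _root_.abs_of_pos hr]
  -- uniform continuity of h
  have hu := Metric.uniformContinuousOn_iff.mp
    ((isCompact_closedBall x r).uniformContinuousOn_of_continuous hc)
  -- continuity of the loops
  have hGcont : ∀ s ∈ Icc (0:ℝ) 1, Continuous (fun t => h (x + ((s*r : ℝ):ℂ) * cir t)) := by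
    intro s hs
    apply hc.comp_continuous
    · exact continuous_const.add (continuous_const.mul cir_cont)
    · intro t; exact hzmem s hs (cir t) (cir_norm t)
  have hGcont' : ∀ s ∈ Icc (0:ℝ) 1, Continuous (fun t => h (x - ((s*r : ℝ):ℂ) * cir t)) := by
    intro s hs
    apply hc.comp_continuous
    · exact continuous_const.sub (continuous_const.mul cir_cont)
    · intro t; exact hzmem' s hs (cir t) (cir_norm t)
  -- main claim: the ball around p of radius d is inside K
  have hball : ball p d ⊆ K := by
    intro q hqb
    by_contra hq
    have hpq : p - q ≠ 0 := sub_ne_zero.mpr (fun hh => hq (hh ▸ hpK))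
    have hqpd : dist q p < d := mem_ball.mp hqb
    -- Stage 1 : contract loop around q
    set ρ₁ : ℝ := infDist q K with hρ₁def
    have hρ₁ : 0 < ρ₁ := (hKclosed.notMem_iff_infDist_pos hKne).mp hq
    obtain ⟨δ₁, hδ₁, hδ₁p⟩ := hu ρ₁ hρ₁
    set Γ₁ : ℝ → ℝ → ℂ := fun s t => h (x + ((s*r : ℝ):ℂ) * cir t) - q with hΓ₁
    have hw₁ : HasWinding (Γ₁ 1) 0 := by
      apply windChain Γ₁ 0 ρ₁ (δ₁ / (2*(r+1))) hρ₁ (by positivity)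
      · intro s hs
        exact (hGcont s hs).sub continuous_const
      · intro s hs t
        have hmem : h (x + ((s*r : ℝ):ℂ) * cir t) ∈ K := ⟨_, hzmem s hs (cir t) (cir_norm t), rfl⟩
        calc ρ₁ ≤ dist q (h (x + ((s*r : ℝ):ℂ) * cir t)) := infDist_le_dist_of_mem hmem
          _ = ‖Γ₁ s t‖ := by rw [hΓ₁, dist_eq_norm']
      · intro s hs
        simp only [hΓ₁, cir_loop]
      · intro s hs s' hs' hss t
        have harg : dist (x + ((s'*r : ℝ):ℂ) * cir t) (x + ((s*r : ℝ):ℂ) * cir t) < δ₁ := by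
          rw [dist_eq_norm]
          rw [show x + ((s'*r : ℝ):ℂ) * cir t - (x + ((s*r : ℝ):ℂ) * cir t)
            = (((s'-s)*r : ℝ):ℂ) * cir t by push_cast; ring]
          rw [norm_mul, cir_norm, mul_one, Complex.norm_real, Real.norm_eq_abs, abs_mul,
            _root_.abs_of_pos hr]
          calc |s' - s| * r ≤ (δ₁ / (2*(r+1))) * r := by
                apply mul_le_mul_of_nonneg_right hss hr.le
            _ < δ₁ := by
                rw [div_mul_eq_mul_div, div_lt_iff₀ (by positivity)]
                nlinarith
        have := hδ₁p _ (hzmem s' hs' (cir t) (cir_norm t)) _ (hzmem s hs (cir t) (cir_norm t)) harg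
        rw [dist_eq_norm] at this
        calc ‖Γ₁ s' t - Γ₁ s t‖
            = ‖h (x + ((s'*r : ℝ):ℂ) * cir t) - h (x + ((s*r : ℝ):ℂ) * cir t)‖ := by
              rw [hΓ₁]; congr 1; ring
          _ < ρ₁ := this
      · -- constant loop at s = 0
        refine ⟨fun _ => Complex.log (p - q), continuous_const, ?_, by simp⟩
        intro t ht
        rw [Complex.exp_log hpq, hΓ₁]
        simp [hp]
    -- Stage 2 : move q to p
    set ρ₂ : ℝ := d - dist q p with hρ₂def
    have hρ₂ : 0 < ρ₂ := by rw [hρ₂def]; linarith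
    set Γ₂ : ℝ → ℝ → ℂ := fun s t => h (x + ((1*r : ℝ):ℂ) * cir t) - (q + (s:ℂ) * (p - q)) with hΓ₂
    have h21 : Γ₂ 0 = Γ₁ 1 := by
      funext t
      rw [hΓ₂, hΓ₁]
      push_cast
      ring
    have hsphd : ∀ t : ℝ, d ≤ ‖h (x + ((1*r : ℝ):ℂ) * cir t) - p‖ := by
      intro t
      have hmem : h (x + ((1*r : ℝ):ℂ) * cir t) ∈ Sph := ⟨_, hsphmem t, rfl⟩
      calc d ≤ dist p (h (x + ((1*r : ℝ):ℂ) * cir t)) := infDist_le_dist_of_mem hmem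
        _ = ‖h (x + ((1*r : ℝ):ℂ) * cir t) - p‖ := by rw [dist_eq_norm']
    have hw₂ : HasWinding (Γ₂ 1) 0 := by
      apply windChain Γ₂ 0 ρ₂ (ρ₂ / (2*(‖p - q‖+1))) hρ₂ (by positivity)
      · intro s hs
        exact (hGcont 1 (by norm_num)).sub continuous_const
      · intro s hs t
        have hc1 : q + (s:ℂ) * (p - q) - p = (1 - (s:ℂ)) * (q - p) := by ring
        have hnc : ‖q + (s:ℂ) * (p - q) - p‖ ≤ dist q p := by
          rw [hc1, norm_mul, dist_eq_norm]
          have h1s : ‖(1 - (s:ℂ))‖ ≤ 1 := by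
            rw [show (1 : ℂ) - (s:ℂ) = ((1 - s : ℝ) : ℂ) by push_cast; ring,
              Complex.norm_real, Real.norm_eq_abs, _root_.abs_of_nonneg (by linarith [hs.2])]
            linarith [hs.1]
          nlinarith [norm_nonneg (q - p)]
        have htri := norm_sub_norm_le (h (x + ((1*r : ℝ):ℂ) * cir t) - p)
          (h (x + ((1*r : ℝ):ℂ) * cir t) - (q + (s:ℂ) * (p - q)))
        rw [show (h (x + ((1*r : ℝ):ℂ) * cir t) - p) -
            (h (x + ((1*r : ℝ):ℂ) * cir t) - (q + (s:ℂ) * (p - q)))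
            = q + (s:ℂ) * (p - q) - p by ring] at htri
        have := hsphd t
        rw [hρ₂def]
        calc d - dist q p ≤ ‖h (x + ((1*r : ℝ):ℂ) * cir t) - p‖ - ‖q + (s:ℂ) * (p - q) - p‖ := by
              linarith
          _ ≤ ‖Γ₂ s t‖ := by rw [hΓ₂]; linarith [htri]
      · intro s hs
        simp only [hΓ₂, cir_loop]
      · intro s hs s' hs' hss t
        calc ‖Γ₂ s' t - Γ₂ s t‖ = ‖((s:ℂ) - (s':ℂ)) * (p - q)‖ := by rw [hΓ₂]; congr 1; ring
          _ = |s - s'| * ‖p - q‖ := by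
              rw [norm_mul, show (s:ℂ) - (s':ℂ) = ((s - s' : ℝ):ℂ) by push_cast; ring,
                Complex.norm_real, Real.norm_eq_abs]
          _ ≤ (ρ₂ / (2*(‖p - q‖+1))) * ‖p - q‖ := by
              apply mul_le_mul_of_nonneg_right _ (norm_nonneg _)
              rw [abs_sub_comm]; exact hss
          _ < ρ₂ := by
              rw [div_mul_eq_mul_div, div_lt_iff₀ (by positivity)]
              nlinarith [norm_nonneg (p - q)]
      · rw [h21]; exact hw₁
    -- Stage 3 : deform to the odd loop
    set F : ℝ × ℝ → ℝ := fun w =>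
      ‖h (x + ((1*r : ℝ):ℂ) * cir w.2) - h (x - ((w.1*r : ℝ):ℂ) * cir w.2)‖ with hF
    have hFc : ContinuousOn F ((Icc (0:ℝ) 1) ×ˢ (Icc (0:ℝ) 1)) := by
      apply ContinuousOn.norm
      apply ContinuousOn.sub
      · apply hc.comp
        · exact (continuous_const.add (continuous_const.mul
            (cir_cont.comp continuous_snd))).continuousOn
        · intro w hw
          exact hzmem 1 (by norm_num) (cir w.2) (cir_norm w.2)
      · apply hc.comp
        · apply Continuous.continuousOn
          apply continuous_const.sub
          apply Continuous.mul
          · exact Complex.continuous_ofReal.comp (continuous_fst.mul continuous_const)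
          · exact cir_cont.comp continuous_snd
        · intro w hw
          exact hzmem' w.1 hw.1 (cir w.2) (cir_norm w.2)
    obtain ⟨w₀, hw₀, hmin'⟩ := (isCompact_Icc.prod isCompact_Icc).exists_isMinOn
      ⟨(0,0), by norm_num⟩ hFc
    have hmin : ∀ w ∈ (Icc (0:ℝ) 1) ×ˢ (Icc (0:ℝ) 1), F w₀ ≤ F w := fun w hw => hmin' hw
    set ρ₃ : ℝ := F w₀ with hρ₃def
    have hρ₃nn : (0:ℝ) ≤ ρ₃ := by rw [hρ₃def, hF]; exact norm_nonneg _
    have hρ₃ : 0 < ρ₃ := by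
      rcases lt_or_eq_of_le hρ₃nn with hlt | heq0
      · exact hlt
      exfalso
      have h0 : h (x + ((1*r : ℝ):ℂ) * cir w₀.2) = h (x - ((w₀.1*r : ℝ):ℂ) * cir w₀.2) := by
        have := heq0.symm
        rw [hρ₃def, hF] at this
        simpa [sub_eq_zero] using norm_eq_zero.mp this
      have heqpt := hi (hzmem 1 (by norm_num) (cir w₀.2) (cir_norm w₀.2))
        (hzmem' w₀.1 hw₀.1 (cir w₀.2) (cir_norm w₀.2)) h0
      have : (((1*r : ℝ):ℂ) + ((w₀.1*r : ℝ):ℂ)) * cir w₀.2 = 0 := by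
        linear_combination heqpt
      rcases mul_eq_zero.mp this with hcc | hcc
      · have : (1*r : ℝ) + (w₀.1*r : ℝ) = 0 := by exact_mod_cast hcc
        nlinarith [hw₀.1.1]
      · exact cir_ne w₀.2 hcc
    obtain ⟨δ₃, hδ₃, hδ₃p⟩ := hu ρ₃ hρ₃
    set Γ₃ : ℝ → ℝ → ℂ := fun s t =>
      h (x + ((1*r : ℝ):ℂ) * cir t) - h (x - ((s*r : ℝ):ℂ) * cir t) with hΓ₃
    have h32 : Γ₃ 0 = Γ₂ 1 := by
      funext t
      rw [hΓ₃, hΓ₂]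
      push_cast
      rw [show x - 0 * (r:ℂ) * cir t = x by ring, show q + 1 * (p - q) = p by ring, ← hp]
    have hw₃ : HasWinding (Γ₃ 1) 0 := by
      apply windChain Γ₃ 0 ρ₃ (δ₃ / (2*(r+1))) hρ₃ (by positivity)
      · intro s hs
        exact (hGcont 1 (by norm_num)).sub (hGcont' s hs)
      · intro s hs t
        have := hmin (s, Int.fract t)
          ⟨hs, ⟨Int.fract_nonneg t, (Int.fract_lt_one t).le⟩⟩
        rw [hρ₃def] at *
        calc F w₀ ≤ F (s, Int.fract t) := this
          _ = ‖Γ₃ s t‖ := by rw [hF, hΓ₃]; simp only [cir_fract]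
      · intro s hs
        simp only [hΓ₃, cir_loop]
      · intro s hs s' hs' hss t
        have harg : dist (x - ((s'*r : ℝ):ℂ) * cir t) (x - ((s*r : ℝ):ℂ) * cir t) < δ₃ := by
          rw [dist_eq_norm]
          rw [show x - ((s'*r : ℝ):ℂ) * cir t - (x - ((s*r : ℝ):ℂ) * cir t)
            = (((s-s')*r : ℝ):ℂ) * cir t by push_cast; ring]
          rw [norm_mul, cir_norm, mul_one, Complex.norm_real, Real.norm_eq_abs, abs_mul,
            _root_.abs_of_pos hr]
          calc |s - s'| * r ≤ (δ₃ / (2*(r+1))) * r := by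
                apply mul_le_mul_of_nonneg_right _ hr.le
                rw [abs_sub_comm]; exact hss
            _ < δ₃ := by
                rw [div_mul_eq_mul_div, div_lt_iff₀ (by positivity)]
                nlinarith
        have := hδ₃p _ (hzmem' s' hs' (cir t) (cir_norm t)) _ (hzmem' s hs (cir t) (cir_norm t)) harg
        rw [dist_eq_norm] at this
        calc ‖Γ₃ s' t - Γ₃ s t‖
            = ‖h (x - ((s'*r : ℝ):ℂ) * cir t) - h (x - ((s*r : ℝ):ℂ) * cir t)‖ := by
              rw [hΓ₃]
              rw [show h (x + ((1*r : ℝ):ℂ) * cir t) - h (x - ((s'*r : ℝ):ℂ) * cir t) -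
                  (h (x + ((1*r : ℝ):ℂ) * cir t) - h (x - ((s*r : ℝ):ℂ) * cir t))
                  = -(h (x - ((s'*r : ℝ):ℂ) * cir t) - h (x - ((s*r : ℝ):ℂ) * cir t)) by ring]
              rw [norm_neg]
          _ < ρ₃ := this
      · rw [h32]; exact hw₂
    -- Stage 4 : the odd loop has nonzero winding
    apply windOdd (Γ₃ 1) _ hw₃
    intro t
    have hol : cir (t + 1/2) = - cir t := cir_half t
    rw [hΓ₃]
    simp only [hol]
    rw [show x + ((1*r : ℝ):ℂ) * (- cir t) = x - ((1*r : ℝ):ℂ) * cir t by ring]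
    rw [show x - ((1*r : ℝ):ℂ) * (- cir t) = x + ((1*r : ℝ):ℂ) * cir t by ring]
    ring
  exact interior_maximal hball isOpen_ball (mem_ball_self hdpos)

lemma interiorMaps (e : E2 ≃L[ℝ] ℂ) {X Y : Set E2} {f : E2 → E2}
    (hmap : Set.MapsTo f X Y) (hinj : Set.InjOn f X) (hfc : ContinuousOn f X)
    {x : E2} (hx : x ∈ interior X) : f x ∈ interior Y := by
  set h : ℂ → ℂ := fun w => e (f (e.symm w)) with hh
  have himgX : ⇑e '' interior X = interior (⇑e '' X) := by
    have := e.toHomeomorph.image_interior X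
    simpa using this
  have hx' : e x ∈ interior (e '' X) := by
    rw [← himgX]
    exact ⟨x, hx, rfl⟩
  obtain ⟨U, hU, hUopen, hUx⟩ := mem_interior.mp hx'
  obtain ⟨ε, hε, hball⟩ := Metric.isOpen_iff.mp hUopen _ hUx
  have hsub : closedBall (e x) (ε/2) ⊆ e '' X :=
    (closedBall_subset_ball (by linarith)).trans (hball.trans hU)
  have hsymm : ∀ w ∈ closedBall (e x) (ε/2), e.symm w ∈ X := by
    intro w hw
    obtain ⟨a, ha, rfl⟩ := hsub hw
    simpa using ha
  have hcont : ContinuousOn h (closedBall (e x) (ε/2)) := by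
    apply Continuous.comp_continuousOn e.continuous
    apply hfc.comp e.symm.continuous.continuousOn
    intro w hw
    exact hsymm w hw
  have hInj : Set.InjOn h (closedBall (e x) (ε/2)) := by
    intro w hw w' hw' hww
    have h1 : f (e.symm w) = f (e.symm w') := e.injective hww
    have h2 : e.symm w = e.symm w' := hinj (hsymm w hw) (hsymm w' hw') h1
    exact e.symm.injective h2
  have hkey := key h (e x) (ε/2) (by linarith) hcont hInj
  have himg : h '' closedBall (e x) (ε/2) ⊆ e '' Y := by
    rintro _ ⟨w, hw, rfl⟩
    exact ⟨f (e.symm w), hmap (hsymm w hw), rfl⟩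
  have hEfx : e (f x) ∈ interior (e '' Y) := by
    have : h (e x) = e (f x) := by rw [hh]; simp
    rw [← this]
    exact interior_mono himg hkey
  have himgY : ⇑e '' interior Y = interior (⇑e '' Y) := by
    have := e.toHomeomorph.image_interior Y
    simpa using this
  rw [← himgY] at hEfx
  obtain ⟨y, hy, hey⟩ := hEfx
  have : y = f x := e.injective hey
  rwa [← this]

end IoD

theorem stmt_5 (X Y : Set E2) (hXne : X.Nonempty) (hYne : Y.Nonempty)
    (hX : IsClosed X) (hY : IsClosed Y)
    (f g : E2 → E2)
    (hf : Set.BijOn f X Y)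
    (hfc : ContinuousOn f X) (hgc : ContinuousOn g Y)
    (hgf : ∀ x ∈ X, g (f x) = x) (hfg : ∀ y ∈ Y, f (g y) = y) :
    f '' (X \ interior X) = Y \ interior Y := by
  have hfin : Module.finrank ℝ E2 = Module.finrank ℝ ℂ := by
    rw [finrank_euclideanSpace_fin, Complex.finrank_real_complex]
  set e : E2 ≃L[ℝ] ℂ := ContinuousLinearEquiv.ofFinrankEq hfin with he
  have hg : Set.BijOn g Y X := Set.BijOn.symm ⟨fun y hy => hfg y hy, fun x hx => hgf x hx⟩ hf
  have hfi : ∀ x ∈ interior X, f x ∈ interior Y := fun x hx =>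
    IoD.interiorMaps e hf.mapsTo hf.injOn hfc hx
  have hgi : ∀ y ∈ interior Y, g y ∈ interior X := fun y hy =>
    IoD.interiorMaps e hg.mapsTo hg.injOn hgc hy
  ext y
  constructor
  · rintro ⟨a, ⟨haX, haI⟩, rfl⟩
    refine ⟨hf.mapsTo haX, fun hyI => haI ?_⟩
    have := hgi _ hyI
    rwa [hgf a haX] at this
  · rintro ⟨hyY, hyI⟩
    refine ⟨g y, ⟨hg.mapsTo hyY, fun hgI => hyI ?_⟩, hfg y hyY⟩
    have := hfi _ hgI
    rwa [hfg y hyY] at this
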